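/- For every n ≥ 2: if L̄_n = V̄_1·L̄_{n-1}, then I^n ∩ J = I·(I^{n-1} ∩ J). Equivalently, if E(I;A/J)_n = 0 then the n-th Artin-Rees module E(J,A;I)_n = (I^n ∩ J)/I·(I^{n-1} ∩ J) vanishes; consequently the strong Artin-Rees number s(J,A;I) is at most the relation type rt(I;A/J) and the medium Artin-Rees number m(J,A;I) is at most the sifted type st(I;A/J). -/

import Mathlib

/-- The `A`-submodule of homogeneous elements of degree `n` in the kernel `L` of the
presentation `φ : A[X_1,…,X_r] → A[t]`, `X_i ↦ x_i t`, of the Rees algebra of the ideal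
`I = (x_1,…,x_r)`; i.e. the degree-`n` equations `L_n` of the Rees algebra. -/
noncomputable def reesRel {A : Type*} [CommRing A] {r : ℕ} (x : Fin r → A) (n : ℕ) :
    Submodule A (MvPolynomial (Fin r) A) :=
  (RingHom.ker (MvPolynomial.aeval (fun i => Polynomial.C (x i) * Polynomial.X) :
      MvPolynomial (Fin r) A →ₐ[A] Polynomial A)).restrictScalars A
  ⊓ MvPolynomial.homogeneousSubmodule (Fin r) A n

/-- `E(I)_n = 0`, i.e. `L_n = V_1·L_{n-1}`: the degree-`n` equations of the Rees algebra
are generated by those of degree `n-1`. -/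
def reesRelStable {A : Type*} [CommRing A] {r : ℕ} (x : Fin r → A) (n : ℕ) : Prop :=
  reesRel x n = MvPolynomial.homogeneousSubmodule (Fin r) A 1 * reesRel x (n - 1)

/-- The set `SD(I) = {1} ∪ {n ≥ 2 : L_n ≠ V_1·L_{n-1}}` of sifted degrees. -/
def siftedDegrees {A : Type*} [CommRing A] {r : ℕ} (x : Fin r → A) : Set ℕ :=
  {1} ∪ {n : ℕ | 2 ≤ n ∧ ¬ reesRelStable x n}

/-- The sifted type `st(I) = card SD(I)`. -/
noncomputable def siftedType {A : Type*} [CommRing A] {r : ℕ} (x : Fin r → A) : ℕ :=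
  (siftedDegrees x).ncard

/-- The relation type `rt(I)`: the least `s ≥ 1` with `L_n = V_1·L_{n-1}` for all
`n ≥ s+1`. -/
noncomputable def relType {A : Type*} [CommRing A] {r : ℕ} (x : Fin r → A) : ℕ :=
  sInf {s : ℕ | 1 ≤ s ∧ ∀ n, s + 1 ≤ n → reesRelStable x n}

/-- The strong Artin-Rees number `s(J,A;I)`: the least `s ≥ 1` with
`I^n ∩ J = I·(I^{n-1} ∩ J)` for all `n ≥ s+1`. -/
noncomputable def strongAR {A : Type*} [CommRing A] (I J : Ideal A) : ℕ :=
  sInf {s : ℕ | 1 ≤ s ∧ ∀ n, s + 1 ≤ n → I ^ n ⊓ J = I * (I ^ (n - 1) ⊓ J)}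

/-- The medium Artin-Rees number `m(J,A;I) = 1 + card{n ≥ 2 : E(J,A;I)_n ≠ 0}`. -/
noncomputable def mediumAR {A : Type*} [CommRing A] (I J : Ideal A) : ℕ :=
  1 + {n : ℕ | 2 ≤ n ∧ I ^ n ⊓ J ≠ I * (I ^ (n - 1) ⊓ J)}.ncard

/-- The weak Artin-Rees number `w(J,A;I)`: the least `s ≥ 1` with
`I^n ∩ J ⊆ I^{n-s}·J` for all `n ≥ s`. -/
noncomputable def weakAR {A : Type*} [CommRing A] (I J : Ideal A) : ℕ :=
  sInf {s : ℕ | 1 ≤ s ∧ ∀ n, s ≤ n → I ^ n ⊓ J ≤ I ^ (n - s) * J}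


open MvPolynomial

section Aux
variable {R : Type*} [CommRing R] {r : ℕ}

lemma st5_aeval_monomial (y : Fin r → R) (α : Fin r →₀ ℕ) (c : R) :
    MvPolynomial.aeval (fun i => Polynomial.C (y i) * Polynomial.X) (monomial α c)
      = Polynomial.C (MvPolynomial.aeval y (monomial α c)) * Polynomial.X ^ (Finsupp.degree α) := by
  rw [MvPolynomial.aeval_monomial, MvPolynomial.aeval_monomial]
  simp only [Finsupp.prod, mul_pow, Finset.prod_mul_distrib, Finset.prod_pow_eq_pow_sum,
    Algebra.algebraMap_self, RingHom.id_apply, map_mul, map_prod, map_pow, Finsupp.degree_apply]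
  ring_nf
  simp [Polynomial.algebraMap_eq, Finsupp.degree_apply]
  ring

lemma st5_coeff_aeval (y : Fin r → R) (q : MvPolynomial (Fin r) R) (m : ℕ) :
    Polynomial.coeff (MvPolynomial.aeval (fun i => Polynomial.C (y i) * Polynomial.X) q) m
      = MvPolynomial.aeval y (homogeneousComponent m q) := by
  conv_lhs => rw [q.as_sum]
  conv_rhs => rw [q.as_sum]
  rw [map_sum, map_sum, map_sum, Polynomial.finset_sum_coeff]
  refine Finset.sum_congr rfl fun α hα => ?_
  rw [st5_aeval_monomial,
    homogeneousComponent_of_mem (isHomogeneous_monomial (coeff α q) rfl),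
    Polynomial.coeff_C_mul, Polynomial.coeff_X_pow]
  by_cases h : m = α.degree
  · simp [h]
  · simp [h, if_neg h]

lemma st5_ker_iff (y : Fin r → R) {n : ℕ} {g : MvPolynomial (Fin r) R}
    (hg : g.IsHomogeneous n) :
    MvPolynomial.aeval (fun i => Polynomial.C (y i) * Polynomial.X) g = 0 ↔
      MvPolynomial.aeval y g = 0 := by
  constructor
  · intro h
    have := st5_coeff_aeval y g n
    rw [h, Polynomial.coeff_zero, homogeneousComponent_of_mem hg, if_pos rfl] at this
    exact this.symm
  · intro h
    ext m
    rw [st5_coeff_aeval y g m, homogeneousComponent_of_mem hg, Polynomial.coeff_zero]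
    split <;> simp [h]

lemma st5_homogeneousComponent_ker (y : Fin r → R) {q : MvPolynomial (Fin r) R}
    (hq : MvPolynomial.aeval (fun i => Polynomial.C (y i) * Polynomial.X) q = 0) (d : ℕ) :
    MvPolynomial.aeval (fun i => Polynomial.C (y i) * Polynomial.X)
      (homogeneousComponent d q) = 0 := by
  rw [st5_ker_iff y (homogeneousComponent_isHomogeneous d q), ← st5_coeff_aeval, hq,
    Polynomial.coeff_zero]

lemma st5_aeval_mem (x : Fin r → R) (K : Ideal R) {n : ℕ} {F : MvPolynomial (Fin r) R}
    (hF : F.IsHomogeneous n) (hc : ∀ α, coeff α F ∈ K) :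
    MvPolynomial.aeval x F ∈ K * (Ideal.span (Set.range x)) ^ n := by
  rw [F.as_sum, map_sum]
  refine Submodule.sum_mem _ fun α hα => ?_
  rw [MvPolynomial.aeval_monomial]
  have hdeg : Finsupp.degree α = n := by
    have := hF (mem_support_iff.mp hα)
    rw [Finsupp.degree_eq_weight_one]; exact this
  refine Ideal.mul_mem_mul ?_ ?_
  · simpa using hc α
  · have h2 : (α.prod fun i k => x i ^ k) ∈ ∏ i ∈ α.support, (Ideal.span (Set.range x)) ^ (α i) :=
      Ideal.prod_mem_prod (fun i _ => Ideal.pow_mem_pow (Ideal.subset_span (Set.mem_range_self i)) _)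
    rwa [Finset.prod_pow_eq_pow_sum, show (∑ i ∈ α.support, α i) = n from hdeg] at h2

lemma st5_aeval_mem_pow (x : Fin r → R) {n : ℕ} {F : MvPolynomial (Fin r) R}
    (hF : F.IsHomogeneous n) :
    MvPolynomial.aeval x F ∈ (Ideal.span (Set.range x)) ^ n := by
  have := st5_aeval_mem x ⊤ hF (fun α => trivial)
  rwa [Ideal.top_mul] at this

lemma st5_exists_homog (x : Fin r → R) {n : ℕ} {a : R}
    (ha : a ∈ (Ideal.span (Set.range x)) ^ n) :
    ∃ F : MvPolynomial (Fin r) R, F.IsHomogeneous n ∧ MvPolynomial.aeval x F = a := by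
  induction n generalizing a with
  | zero =>
    exact ⟨MvPolynomial.C a, isHomogeneous_C _ _, by simp⟩
  | succ n IH =>
    rw [pow_succ] at ha
    refine Submodule.mul_induction_on ha (fun b hb c hc => ?_) (fun b c ⟨F, hF, hFe⟩ ⟨G, hG, hGe⟩ =>
      ⟨F + G, hF.add hG, by rw [map_add, hFe, hGe]⟩)
    obtain ⟨F, hFh, hFe⟩ := IH hb
    rw [Ideal.span, Submodule.mem_span_range_iff_exists_fun] at hc
    obtain ⟨f, hf⟩ := hc
    refine ⟨F * ∑ i, MvPolynomial.C (f i) * MvPolynomial.X i, hFh.mul ?_, ?_⟩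
    · exact IsHomogeneous.sum _ _ _ fun i _ => isHomogeneous_C_mul_X _ _
    · rw [map_mul, hFe, map_sum]
      simp only [map_mul, MvPolynomial.aeval_C, MvPolynomial.aeval_X, Algebra.algebraMap_self,
        RingHom.id_apply]
      rw [show (∑ i, f i * x i) = c by simpa [smul_eq_mul] using hf]

lemma st5_map_homogeneousComponent {S : Type*} [CommRing S] (f : R →+* S)
    (q : MvPolynomial (Fin r) R) (n : ℕ) :
    MvPolynomial.map f (homogeneousComponent n q)
      = homogeneousComponent n (MvPolynomial.map f q) := by
  ext α
  rw [coeff_map, coeff_homogeneousComponent, coeff_homogeneousComponent, apply_ite f,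
    map_zero, coeff_map]

lemma st5_exists_homog_lift {S : Type*} [CommRing S] {f : R →+* S}
    (hf : Function.Surjective f) {n : ℕ} {p : MvPolynomial (Fin r) S}
    (hp : p.IsHomogeneous n) :
    ∃ G : MvPolynomial (Fin r) R, G.IsHomogeneous n ∧ MvPolynomial.map f G = p := by
  obtain ⟨q, hq⟩ := MvPolynomial.map_surjective f hf p
  refine ⟨homogeneousComponent n q, homogeneousComponent_isHomogeneous n q, ?_⟩
  rw [st5_map_homogeneousComponent, hq, homogeneousComponent_of_mem hp, if_pos rfl]

lemma st5_aeval_map_quot {A : Type*} [CommRing A] (J : Ideal A) (x : Fin r → A)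
    (G : MvPolynomial (Fin r) A) :
    MvPolynomial.aeval (fun i => Ideal.Quotient.mk J (x i))
        (MvPolynomial.map (Ideal.Quotient.mk J) G)
      = Ideal.Quotient.mk J (MvPolynomial.aeval x G) := by
  rw [show (Ideal.Quotient.mk J : A →+* A ⧸ J) = algebraMap A (A ⧸ J) from rfl,
    MvPolynomial.aeval_map_algebraMap]
  exact (MvPolynomial.comp_aeval (Ideal.Quotient.mkₐ A J) (f := x)).symm ▸ rfl

end Aux


section Aux2
variable {R : Type*} [CommRing R] {r : ℕ}

lemma st5_mem_reesRel_iff (y : Fin r → R) (n : ℕ) (p : MvPolynomial (Fin r) R) :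
    p ∈ reesRel y n ↔ p.IsHomogeneous n ∧ MvPolynomial.aeval y p = 0 := by
  rw [reesRel, Submodule.mem_inf, Submodule.restrictScalars_mem, RingHom.mem_ker,
    mem_homogeneousSubmodule, and_comm]
  constructor
  · rintro ⟨h1, h2⟩
    exact ⟨h1, (st5_ker_iff y h1).mp h2⟩
  · rintro ⟨h1, h2⟩
    exact ⟨h1, (st5_ker_iff y h1).mpr h2⟩

end Aux2

lemma st5_AR {A : Type*} [CommRing A] {r : ℕ} (x : Fin r → A) (J : Ideal A) {n : ℕ}
    (hn : 2 ≤ n) (h : reesRelStable (fun i => Ideal.Quotient.mk J (x i)) n) :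
    (Ideal.span (Set.range x)) ^ n ⊓ J =
      Ideal.span (Set.range x) * ((Ideal.span (Set.range x)) ^ (n - 1) ⊓ J) := by
  set I := Ideal.span (Set.range x) with hI
  have hIpow : I ^ n = I * I ^ (n - 1) := by
    conv_lhs => rw [show n = (n-1)+1 by omega]
    rw [pow_succ']
  refine le_antisymm ?_ ?_
  · intro a ha
    obtain ⟨ha1, ha2⟩ := Submodule.mem_inf.mp ha
    obtain ⟨F, hFh, hFe⟩ := st5_exists_homog x ha1
    set xb := fun i => Ideal.Quotient.mk J (x i) with hxb
    have hFbar : MvPolynomial.map (Ideal.Quotient.mk J) F ∈ reesRel xb n := by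
      refine (st5_mem_reesRel_iff _ _ _).mpr ⟨hFh.map _, ?_⟩
      rw [hxb, st5_aeval_map_quot, hFe, Ideal.Quotient.eq_zero_iff_mem]
      exact ha2
    rw [reesRelStable] at h
    have hmem := h ▸ hFbar
    have key : ∀ p ∈ MvPolynomial.homogeneousSubmodule (Fin r) (A ⧸ J) 1 * reesRel xb (n - 1),
        ∃ G : MvPolynomial (Fin r) A, G.IsHomogeneous n ∧
          MvPolynomial.map (Ideal.Quotient.mk J) G = p ∧
          MvPolynomial.aeval x G ∈ I * (I ^ (n - 1) ⊓ J) := by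
      intro p hp
      refine Submodule.mul_induction_on hp ?_ ?_
      · intro v hv g hg
        obtain ⟨V, hVh, hVm⟩ := st5_exists_homog_lift Ideal.Quotient.mk_surjective
          ((mem_homogeneousSubmodule _ _).mp hv)
        obtain ⟨hgh, hge⟩ := (st5_mem_reesRel_iff _ _ _).mp hg
        obtain ⟨G0, hG0h, hG0m⟩ := st5_exists_homog_lift Ideal.Quotient.mk_surjective hgh
        refine ⟨V * G0, ?_, ?_, ?_⟩
        · have := hVh.mul hG0h
          rwa [show 1 + (n-1) = n by omega] at this
        · rw [map_mul, hVm, hG0m]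
        · rw [map_mul]
          refine Ideal.mul_mem_mul ?_ (Submodule.mem_inf.mpr ⟨st5_aeval_mem_pow x hG0h, ?_⟩)
          · have := st5_aeval_mem_pow x hVh
            rwa [pow_one] at this
          · rw [← Ideal.Quotient.eq_zero_iff_mem, ← st5_aeval_map_quot, hG0m]
            exact hge
      · rintro p q ⟨G1, h1h, h1m, h1e⟩ ⟨G2, h2h, h2m, h2e⟩
        exact ⟨G1 + G2, h1h.add h2h, by rw [map_add, h1m, h2m],
          by rw [map_add]; exact add_mem h1e h2e⟩
    obtain ⟨G, hGh, hGm, hGe⟩ := key _ hmem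
    have hmapD : MvPolynomial.map (Ideal.Quotient.mk J) (F - G) = 0 := by
      rw [map_sub, hGm, sub_self]
    have hD : ∀ α, MvPolynomial.coeff α (F - G) ∈ J := by
      intro α
      have := congrArg (MvPolynomial.coeff α) hmapD
      rwa [MvPolynomial.coeff_map, MvPolynomial.coeff_zero,
        Ideal.Quotient.eq_zero_iff_mem] at this
    have hDe : MvPolynomial.aeval x (F - G) ∈ J * I ^ n :=
      st5_aeval_mem x J (hFh.sub hGh) hD
    have hJI : J * I ^ n ≤ I * (I ^ (n - 1) ⊓ J) := by
      rw [hIpow, show J * (I * I ^ (n-1)) = I * (I ^ (n-1) * J) by ring]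
      exact Ideal.mul_mono_right (le_inf Ideal.mul_le_left Ideal.mul_le_right)
    have : a = MvPolynomial.aeval x G + MvPolynomial.aeval x (F - G) := by
      rw [map_sub, hFe]; ring
    rw [this]
    exact add_mem hGe (hJI hDe)
  · refine le_inf ?_ ?_
    · rw [hIpow]
      exact Ideal.mul_mono_right inf_le_left
    · exact le_trans Ideal.mul_le_right inf_le_right


section Aux3
variable {R : Type*} [CommRing R] {r : ℕ}

lemma st5_hom_mul_reesRel (y : Fin r → R) (d m : ℕ) :
    MvPolynomial.homogeneousSubmodule (Fin r) R d * reesRel y m ≤ reesRel y (d + m) :=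
  Submodule.mul_le.mpr fun u hu w hw => by
    obtain ⟨hwh, hwe⟩ := (st5_mem_reesRel_iff _ _ _).mp hw
    exact (st5_mem_reesRel_iff _ _ _).mpr
      ⟨((mem_homogeneousSubmodule _ _).mp hu).mul hwh, by rw [map_mul, hwe, mul_zero]⟩

lemma st5_degree_single_one (i : Fin r) : Finsupp.degree (Finsupp.single i 1) = 1 := by
  simp [Finsupp.degree_apply, Finsupp.support_single_ne_zero]

lemma st5_hom_factor {m : ℕ} (hm : 1 ≤ m) :
    MvPolynomial.homogeneousSubmodule (Fin r) R m ≤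
      MvPolynomial.homogeneousSubmodule (Fin r) R 1 *
        MvPolynomial.homogeneousSubmodule (Fin r) R (m - 1) := by
  intro p hp
  rw [mem_homogeneousSubmodule] at hp
  rw [p.as_sum]
  refine Submodule.sum_mem _ fun α hα => ?_
  have hdeg : Finsupp.degree α = m := by
    have := hp (mem_support_iff.mp hα)
    rw [Finsupp.degree_eq_weight_one]; exact this
  have hα0 : α ≠ 0 := by
    intro h0
    rw [h0, map_zero] at hdeg
    omega
  obtain ⟨i, hi⟩ := Finsupp.ne_iff.mp hα0
  simp only [Finsupp.coe_zero, Pi.zero_apply] at hi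
  have hle : Finsupp.single i 1 ≤ α := Finsupp.single_le_iff.mpr (by omega)
  have hαβ : Finsupp.single i 1 + (α - Finsupp.single i 1) = α := add_tsub_cancel_of_le hle
  have hmono : (monomial α (coeff α p) : MvPolynomial (Fin r) R)
      = MvPolynomial.X i * monomial (α - Finsupp.single i 1) (coeff α p) := by
    rw [MvPolynomial.X, monomial_mul, one_mul, hαβ]
  rw [hmono]
  refine Submodule.mul_mem_mul (isHomogeneous_X _ _) (isHomogeneous_monomial _ ?_)
  have hdadd : Finsupp.degree (Finsupp.single i 1) + Finsupp.degree (α - Finsupp.single i 1)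
      = Finsupp.degree α := by
    rw [Finsupp.degree_eq_weight_one, ← map_add, hαβ]
  rw [st5_degree_single_one] at hdadd
  omega

lemma st5_homComp_mul {d n : ℕ} (hdn : d ≤ n) {g : MvPolynomial (Fin r) R}
    (hg : g.IsHomogeneous d) (c : MvPolynomial (Fin r) R) :
    homogeneousComponent n (c * g) = homogeneousComponent (n - d) c * g := by
  conv_lhs => rw [← sum_homogeneousComponent c, Finset.sum_mul, map_sum]
  have hterm : ∀ e ∈ Finset.range (c.totalDegree + 1),
      homogeneousComponent n (homogeneousComponent e c * g)
        = if e = n - d then homogeneousComponent e c * g else 0 := by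
    intro e _
    rw [homogeneousComponent_of_mem
      ((homogeneousComponent_isHomogeneous e c).mul hg)]
    congr 1
    simp only [eq_iff_iff]
    omega
  rw [Finset.sum_congr rfl hterm, Finset.sum_ite_eq' (Finset.range (c.totalDegree + 1))]
  split
  · rfl
  · next hmem =>
    have : c.totalDegree < n - d := by
      simp only [Finset.mem_range] at hmem
      omega
    rw [homogeneousComponent_eq_zero _ _ this, zero_mul]

lemma st5_stable_of_large (y : Fin r → R) [IsNoetherianRing R] :
    ∃ N : ℕ, 1 ≤ N ∧ ∀ n, N + 1 ≤ n → reesRelStable y n := by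
  classical
  set φ : MvPolynomial (Fin r) R →ₐ[R] Polynomial R :=
    MvPolynomial.aeval (fun i => Polynomial.C (y i) * Polynomial.X) with hφ
  have hfg : (RingHom.ker φ).FG :=
    (isNoetherianRing_iff_ideal_fg _).mp inferInstance (RingHom.ker φ)
  obtain ⟨T, hT⟩ := hfg
  set N := 1 + T.sup (fun f => f.totalDegree) with hN
  refine ⟨N, by omega, fun n hn => ?_⟩
  -- the set of homogeneous components of elements of T
  set T' : Set (MvPolynomial (Fin r) R) :=
    {g | ∃ t ∈ T, ∃ d, g = homogeneousComponent d t} with hT'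
  have hT'ker : ∀ g ∈ T', φ g = 0 := by
    rintro g ⟨t, ht, d, rfl⟩
    have htker : φ t = 0 := by
      rw [← RingHom.mem_ker, ← hT]
      exact Ideal.subset_span ht
    exact st5_homogeneousComponent_ker y htker d
  have hspan : RingHom.ker φ ≤ Ideal.span T' := by
    rw [← hT, Ideal.span_le]
    intro t ht
    have : t = ∑ i ∈ Finset.range (t.totalDegree + 1), homogeneousComponent i t :=
      (sum_homogeneousComponent t).symm
    rw [this]
    exact Submodule.sum_mem _ fun i _ =>
      Ideal.subset_span ⟨t, ht, i, rfl⟩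
  have hhom1 : ∀ m₁ m₂ : ℕ, m₁ + m₂ = n → 1 ≤ n →
      MvPolynomial.homogeneousSubmodule (Fin r) R 1 * reesRel y (n-1) ≤ reesRel y n := by
    intro _ _ _ _
    have := st5_hom_mul_reesRel y 1 (n-1)
    rwa [show 1+(n-1) = n by omega] at this
  rw [reesRelStable]
  refine le_antisymm ?_ ?_
  · intro p hp
    obtain ⟨hph, hpe⟩ := (st5_mem_reesRel_iff _ _ _).mp hp
    have hpL : p ∈ Ideal.span T' :=
      hspan (RingHom.mem_ker.mpr ((st5_ker_iff y hph).mpr hpe))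
    rw [Ideal.span, Submodule.mem_span_set] at hpL
    obtain ⟨cf, hcf, hsum⟩ := hpL
    have hpeq : p = ∑ g ∈ cf.support, homogeneousComponent n (cf g * g) := by
      have h0 : homogeneousComponent n p = p := by
        rw [homogeneousComponent_of_mem ((mem_homogeneousSubmodule _ _).mpr hph), if_pos rfl]
      conv_lhs => rw [← h0, ← hsum]
      rw [Finsupp.sum, map_sum]
      refine Finset.sum_congr rfl fun g _ => ?_
      rw [smul_eq_mul]
    rw [hpeq]
    refine Submodule.sum_mem _ fun g hgs => ?_
    have hgT' : g ∈ T' := hcf hgs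
    by_cases hg0 : g = 0
    · rw [hg0, mul_zero, map_zero]
      exact Submodule.zero_mem _
    obtain ⟨t, htT, d, hgd⟩ := hgT'
    have hgh : g.IsHomogeneous d := hgd ▸ homogeneousComponent_isHomogeneous d t
    have hgker : φ g = 0 := hT'ker g ⟨t, htT, d, hgd⟩
    have hdle : d ≤ t.totalDegree := by
      by_contra hlt
      exact hg0 (hgd.trans (homogeneousComponent_eq_zero _ _ (by omega)))
    have hdN : d + 2 ≤ n := by
      have : t.totalDegree ≤ T.sup (fun f => f.totalDegree) := Finset.le_sup htT
      omega
    rw [st5_homComp_mul (by omega) hgh]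
    have h1 : homogeneousComponent (n - d) (cf g) ∈
        MvPolynomial.homogeneousSubmodule (Fin r) R 1 *
          MvPolynomial.homogeneousSubmodule (Fin r) R (n - d - 1) :=
      st5_hom_factor (by omega)
        ((mem_homogeneousSubmodule _ _).mpr (homogeneousComponent_isHomogeneous _ _))
    have h2 : g ∈ reesRel y d :=
      (st5_mem_reesRel_iff _ _ _).mpr ⟨hgh, (st5_ker_iff y hgh).mp hgker⟩
    have h3 := Submodule.mul_mem_mul h1 h2
    rw [mul_assoc] at h3
    have h5 : MvPolynomial.homogeneousSubmodule (Fin r) R (n-d-1) * reesRel y d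
        ≤ reesRel y (n-1) := by
      have := st5_hom_mul_reesRel y (n-d-1) d
      rwa [show n-d-1+d = n-1 by omega] at this
    exact (Submodule.mul_le.mpr fun u hu w hw => Submodule.mul_mem_mul hu (h5 hw)) h3
  · have := st5_hom_mul_reesRel y 1 (n-1)
    rwa [show 1+(n-1) = n by omega] at this
end Aux3
/-- For every `n ≥ 2`: if `L̄_n = V̄_1·L̄_{n-1}` (i.e. `E(I;A/J)_n = 0`) then
`I^n ∩ J = I·(I^{n-1} ∩ J)` (i.e. `E(J,A;I)_n = 0`); consequently
`s(J,A;I) ≤ rt(I;A/J)` and `m(J,A;I) ≤ st(I;A/J)`. -/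
theorem stmt_5 {A : Type*} [CommRing A] [IsNoetherianRing A] {r : ℕ}
    (x : Fin r → A) (J : Ideal A) :
    (∀ n, 2 ≤ n → reesRelStable (fun i => Ideal.Quotient.mk J (x i)) n →
      (Ideal.span (Set.range x)) ^ n ⊓ J =
        Ideal.span (Set.range x) * ((Ideal.span (Set.range x)) ^ (n - 1) ⊓ J)) ∧
    strongAR (Ideal.span (Set.range x)) J ≤
      relType (fun i => Ideal.Quotient.mk J (x i)) ∧
    mediumAR (Ideal.span (Set.range x)) J ≤
      siftedType (fun i => Ideal.Quotient.mk J (x i)) := by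
  have main : ∀ n, 2 ≤ n → reesRelStable (fun i => Ideal.Quotient.mk J (x i)) n →
      (Ideal.span (Set.range x)) ^ n ⊓ J =
        Ideal.span (Set.range x) * ((Ideal.span (Set.range x)) ^ (n - 1) ⊓ J) :=
    fun n hn h => st5_AR x J hn h
  obtain ⟨N, hN1, hNs⟩ := st5_stable_of_large (fun i => Ideal.Quotient.mk J (x i))
  refine ⟨main, ?_, ?_⟩
  · have hne : ({s : ℕ | 1 ≤ s ∧ ∀ n, s + 1 ≤ n →
        reesRelStable (fun i => Ideal.Quotient.mk J (x i)) n}).Nonempty := ⟨N, hN1, hNs⟩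
    obtain ⟨h1, h2⟩ := Nat.sInf_mem hne
    rw [strongAR, relType]
    exact Nat.sInf_le ⟨h1, fun n hn => main n (by omega) (h2 n hn)⟩
  · set B := {n : ℕ | 2 ≤ n ∧ ¬ reesRelStable (fun i => Ideal.Quotient.mk J (x i)) n} with hB
    have hsub : {n : ℕ | 2 ≤ n ∧ (Ideal.span (Set.range x)) ^ n ⊓ J ≠
        Ideal.span (Set.range x) * ((Ideal.span (Set.range x)) ^ (n - 1) ⊓ J)} ⊆ B :=
      fun n hn => ⟨hn.1, fun hs => hn.2 (main n hn.1 hs)⟩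
    have hBfin : B.Finite := by
      refine Set.Finite.subset (Set.finite_Iic N) (fun n hn => ?_)
      simp only [Set.mem_Iic]
      by_contra hlt
      exact hn.2 (hNs n (by omega))
    rw [mediumAR, siftedType, siftedDegrees]
    have hdisj : Disjoint ({1} : Set ℕ) B := by
      rw [Set.disjoint_left]
      rintro a ha hmem
      rw [Set.mem_singleton_iff] at ha
      rw [hB, ha] at hmem
      simp only [Set.mem_setOf_eq] at hmem
      omega
    rw [Set.ncard_union_eq hdisj (Set.finite_singleton 1) hBfin, Set.ncard_singleton]
    exact Nat.add_le_add_left (Set.ncard_le_ncard hsub hBfin) 1
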